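/- Let ρ be a density matrix and σ a positive semidefinite Hermitian matrix on ℂ^n, with spectral decompositions ρ = Σ_j λ_j P_j and σ = Σ_k μ_k Q_k. For t ∈ (0,1) define D_{−f_t}(ρ‖σ) = −Σ_{j:λ_j>0} Σ_{k:μ_k>0} λ_j f_t(μ_k λ_j^{−1}) tr(P_j Q_k) + (1/(1−t))·tr(ρ(I − σ⁰)), where σ⁰ is the orthogonal projection onto the support of σ. Then lim_{t→0⁺} D_{−f_t}(ρ‖σ) = 1 − tr(ρ⁰ σ), where ρ⁰ is the orthogonal projection onto the support of ρ. -/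

import Mathlib

open scoped ComplexOrder Matrix

/-- The function `f_t(x) = (x-1)/(t(x-1)+1)`. -/
noncomputable def ft (t x : ℝ) : ℝ := (x - 1) / (t * (x - 1) + 1)

/-- The orthogonal projection onto the support of a Hermitian matrix, defined via its spectral
decomposition: `σ⁰ = ∑_{k : μ_k ≠ 0} |w_k⟩⟨w_k|`. (Junk value `0` if the matrix fails to be
Hermitian.) -/
noncomputable def suppProj {N : Type*} [Fintype N] [DecidableEq N] (σ : Matrix N N ℂ) :
    Matrix N N ℂ :=
  if h : σ.IsHermitian then
    ∑ k ∈ Finset.univ.filter (fun k => h.eigenvalues k ≠ 0),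
      Matrix.of (fun i j => (h.eigenvectorBasis k) i * star ((h.eigenvectorBasis k) j))
  else 0

/-- The standard `(-f_t)`-divergence of two Hermitian positive semidefinite matrices for
`t ∈ (0,1)`, including the `-f_t(0⁺) = 1/(1-t)` term:
`D_{-f_t}(ρ‖σ) = -∑_{j : λ_j > 0} ∑_{k : μ_k > 0} λ_j f_t(μ_k λ_j⁻¹) tr(P_j Q_k)
+ (1/(1-t))·tr(ρ(I - σ⁰))`, where `tr(P_j Q_k) = ‖⟨v_j, w_k⟩‖²` for eigenvectors `v_j` of `ρ`
and `w_k` of `σ`. (Junk value `0` if either matrix fails to be Hermitian.) -/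
noncomputable def DnegFull {N : Type*} [Fintype N] [DecidableEq N] (t : ℝ)
    (ρ σ : Matrix N N ℂ) : ℝ :=
  if h : ρ.IsHermitian ∧ σ.IsHermitian then
    (-∑ j ∈ Finset.univ.filter (fun j => 0 < h.1.eigenvalues j),
        ∑ k ∈ Finset.univ.filter (fun k => 0 < h.2.eigenvalues k),
          h.1.eigenvalues j * ft t (h.2.eigenvalues k * (h.1.eigenvalues j)⁻¹) *
            ‖(inner ℂ (h.1.eigenvectorBasis j) (h.2.eigenvectorBasis k) : ℂ)‖ ^ 2) +
      (1 / (1 - t)) * (Matrix.trace (ρ * (1 - suppProj σ))).re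
  else 0

/-- Rank-one spectral decomposition of a Hermitian matrix. -/
lemma herm_decomp {n : ℕ} {A : Matrix (Fin n) (Fin n) ℂ} (hA : A.IsHermitian) :
    A = ∑ k, (hA.eigenvalues k : ℂ) •
      Matrix.of (fun i j => hA.eigenvectorBasis k i * star (hA.eigenvectorBasis k j)) := by
  ext i j
  conv_lhs => rw [hA.spectral_theorem]
  simp only [Unitary.conjStarAlgAut_apply, Matrix.mul_apply, Matrix.diagonal_apply, Matrix.sum_apply,
    Matrix.IsHermitian.eigenvectorUnitary_apply, Matrix.star_apply, Finset.sum_mul,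
    Matrix.smul_apply, Matrix.of_apply, smul_eq_mul, Function.comp_apply]
  rw [Finset.sum_comm]
  apply Finset.sum_congr rfl
  intro k _
  rw [Finset.sum_eq_single k]
  · simp [mul_comm, mul_assoc, RCLike.star_def]
  · intro b _ hb; simp [hb.symm]
  · simp

lemma trace_rankOne {n : ℕ} (v w : EuclideanSpace ℂ (Fin n)) :
    Matrix.trace ((Matrix.of fun i j => v i * star (v j)) *
        (Matrix.of fun i j => w i * star (w j)))
      = ((‖(inner ℂ v w : ℂ)‖ : ℝ) : ℂ) ^ 2 := by
  have h1 : Matrix.trace ((Matrix.of fun i j => v i * star (v j)) *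
      (Matrix.of fun i j => w i * star (w j)))
      = (∑ l, star (v l) * w l) * (∑ i, v i * star (w i)) := by
    rw [Finset.sum_mul_sum, Matrix.trace]
    simp only [Matrix.diag_apply, Matrix.mul_apply, Matrix.of_apply]
    rw [Finset.sum_comm]
    exact Finset.sum_congr rfl fun l _ => Finset.sum_congr rfl fun i _ => by ring
  have h2 : (inner ℂ v w : ℂ) = ∑ l, star (v l) * w l := by
    simp [PiLp.inner_apply, RCLike.inner_apply, RCLike.star_def]
    exact Finset.sum_congr rfl fun _ _ => mul_comm _ _
  have h3 : (∑ i, v i * star (w i)) = star (inner ℂ v w : ℂ) := by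
    rw [h2, star_sum]
    exact Finset.sum_congr rfl fun i _ => by simp [mul_comm]
  rw [h1, h3, ← h2]
  rw [show star (inner ℂ v w : ℂ) = (starRingEnd ℂ) (inner ℂ v w) from rfl, Complex.mul_conj']

lemma trace_decomp_mul_proj {n : ℕ} (c : Fin n → ℝ) (v w : Fin n → EuclideanSpace ℂ (Fin n))
    (T : Finset (Fin n)) :
    Matrix.trace ((∑ j, (c j : ℂ) • Matrix.of fun i i' => v j i * star (v j i')) *
        ∑ k ∈ T, Matrix.of fun i i' => w k i * star (w k i')) =
      ((∑ j, ∑ k ∈ T, c j * ‖(inner ℂ (v j) (w k) : ℂ)‖ ^ 2 : ℝ) : ℂ) := by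
  rw [Finset.sum_mul]
  simp only [Matrix.smul_mul, Finset.mul_sum, Matrix.trace_sum, Finset.smul_sum,
    Matrix.trace_smul, trace_rankOne, smul_eq_mul]
  push_cast
  ring

lemma trace_proj_mul_decomp {n : ℕ} (d : Fin n → ℝ) (v w : Fin n → EuclideanSpace ℂ (Fin n))
    (S : Finset (Fin n)) :
    Matrix.trace ((∑ j ∈ S, Matrix.of fun i i' => v j i * star (v j i')) *
        ∑ k, (d k : ℂ) • Matrix.of fun i i' => w k i * star (w k i')) =
      ((∑ j ∈ S, ∑ k, d k * ‖(inner ℂ (v j) (w k) : ℂ)‖ ^ 2 : ℝ) : ℂ) := by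
  rw [Finset.sum_mul]
  simp only [Finset.mul_sum, Matrix.mul_smul, Matrix.trace_sum, Finset.smul_sum,
    Matrix.trace_smul, trace_rankOne, smul_eq_mul]
  push_cast
  ring

/-- As `t → 0⁺`, the divergence `D_{-f_t}(ρ‖σ)` of a density matrix `ρ` and a positive
semidefinite matrix `σ` tends to `1 - tr(ρ⁰σ)`, where `ρ⁰` is the orthogonal projection onto
the support of `ρ`. -/
theorem DnegFull_tendsto_zero (n : ℕ) (hn : 1 ≤ n)
    (ρ σ : Matrix (Fin n) (Fin n) ℂ)
    (hρ : ρ.PosSemidef) (hρtr : ρ.trace = 1) (hσ : σ.PosSemidef) :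
    Filter.Tendsto (fun t : ℝ => DnegFull t ρ σ)
      (nhdsWithin 0 (Set.Ioi 0))
      (nhds (1 - (Matrix.trace (suppProj ρ * σ)).re)) := by
  have hRH : ρ.IsHermitian := hρ.1
  have hSH : σ.IsHermitian := hσ.1
  have hH : ρ.IsHermitian ∧ σ.IsHermitian := ⟨hRH, hSH⟩
  have hanneg : ∀ j, 0 ≤ hRH.eigenvalues j := fun j => hρ.eigenvalues_nonneg j
  have hbnneg : ∀ k, 0 ≤ hSH.eigenvalues k := fun k => hσ.eigenvalues_nonneg k
  -- support projections as sums over positive eigenvalues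
  have hPσ : suppProj σ = ∑ k ∈ Finset.univ.filter (fun k => 0 < hSH.eigenvalues k),
      Matrix.of fun i i' => hSH.eigenvectorBasis k i * star (hSH.eigenvectorBasis k i') := by
    rw [suppProj, dif_pos hSH]
    refine Finset.sum_congr (Finset.filter_congr fun k _ => ?_) fun _ _ => rfl
    simp only [ne_eq, eq_iff_iff]
    exact ⟨fun h => (hbnneg k).lt_of_ne (Ne.symm h), fun h => h.ne'⟩
  have hPρ : suppProj ρ = ∑ j ∈ Finset.univ.filter (fun j => 0 < hRH.eigenvalues j),
      Matrix.of fun i i' => hRH.eigenvectorBasis j i * star (hRH.eigenvectorBasis j i') := by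
    rw [suppProj, dif_pos hRH]
    refine Finset.sum_congr (Finset.filter_congr fun j _ => ?_) fun _ _ => rfl
    simp only [ne_eq, eq_iff_iff]
    exact ⟨fun h => (hanneg j).lt_of_ne (Ne.symm h), fun h => h.ne'⟩
  -- trace computations
  have E2 : Matrix.trace (suppProj ρ * σ) =
      ((∑ j ∈ Finset.univ.filter (fun j => 0 < hRH.eigenvalues j), ∑ k,
        hSH.eigenvalues k *
          ‖(inner ℂ (hRH.eigenvectorBasis j) (hSH.eigenvectorBasis k) : ℂ)‖ ^ 2 : ℝ) : ℂ) := by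
    conv_lhs => rw [hPρ, herm_decomp hSH]
    exact trace_proj_mul_decomp _ _ _ _
  have E1 : Matrix.trace (ρ * suppProj σ) =
      ((∑ j, ∑ k ∈ Finset.univ.filter (fun k => 0 < hSH.eigenvalues k),
        hRH.eigenvalues j *
          ‖(inner ℂ (hRH.eigenvectorBasis j) (hSH.eigenvectorBasis k) : ℂ)‖ ^ 2 : ℝ) : ℂ) := by
    conv_lhs => rw [hPσ, herm_decomp hRH]
    exact trace_decomp_mul_proj _ _ _ _
  have E1re : (Matrix.trace (ρ * (1 - suppProj σ))).re =
      1 - ∑ j, ∑ k ∈ Finset.univ.filter (fun k => 0 < hSH.eigenvalues k),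
        hRH.eigenvalues j *
          ‖(inner ℂ (hRH.eigenvectorBasis j) (hSH.eigenvectorBasis k) : ℂ)‖ ^ 2 := by
    rw [Matrix.mul_sub, mul_one, Matrix.trace_sub, E1, hρtr, Complex.sub_re, Complex.one_re,
      Complex.ofReal_re]
  have E2re : (Matrix.trace (suppProj ρ * σ)).re =
      ∑ j ∈ Finset.univ.filter (fun j => 0 < hRH.eigenvalues j), ∑ k,
        hSH.eigenvalues k *
          ‖(inner ℂ (hRH.eigenvectorBasis j) (hSH.eigenvectorBasis k) : ℂ)‖ ^ 2 := by
    rw [E2, Complex.ofReal_re]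
  -- the value at t = 0
  have hval : (-∑ j ∈ Finset.univ.filter (fun j => 0 < hRH.eigenvalues j),
        ∑ k ∈ Finset.univ.filter (fun k => 0 < hSH.eigenvalues k),
          hRH.eigenvalues j * ft 0 (hSH.eigenvalues k * (hRH.eigenvalues j)⁻¹) *
            ‖(inner ℂ (hRH.eigenvectorBasis j) (hSH.eigenvectorBasis k) : ℂ)‖ ^ 2) +
      (1 / (1 - (0:ℝ))) * (Matrix.trace (ρ * (1 - suppProj σ))).re =
      1 - (Matrix.trace (suppProj ρ * σ)).re := by
    rw [E1re, E2re]
    have hsplit : ∀ j ∈ Finset.univ.filter (fun j => 0 < hRH.eigenvalues j),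
        ∀ k ∈ Finset.univ.filter (fun k => 0 < hSH.eigenvalues k),
        hRH.eigenvalues j * ft 0 (hSH.eigenvalues k * (hRH.eigenvalues j)⁻¹) *
            ‖(inner ℂ (hRH.eigenvectorBasis j) (hSH.eigenvectorBasis k) : ℂ)‖ ^ 2 =
          hSH.eigenvalues k *
            ‖(inner ℂ (hRH.eigenvectorBasis j) (hSH.eigenvectorBasis k) : ℂ)‖ ^ 2 -
          hRH.eigenvalues j *
            ‖(inner ℂ (hRH.eigenvectorBasis j) (hSH.eigenvectorBasis k) : ℂ)‖ ^ 2 := by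
      intro j hj k hk
      simp only [Finset.mem_filter] at hj
      have hja : hRH.eigenvalues j ≠ 0 := hj.2.ne'
      simp only [ft]
      field_simp
      have hinv : hRH.eigenvalues j * (hRH.eigenvalues j)⁻¹ = 1 := mul_inv_cancel₀ hja
      linear_combination (hSH.eigenvalues k * ‖inner ℂ (hRH.eigenvectorBasis j) (hSH.eigenvectorBasis k)‖ ^ 2 -
        hRH.eigenvalues j * ‖inner ℂ (hRH.eigenvectorBasis j) (hSH.eigenvectorBasis k)‖ ^ 2) * hinv
    rw [Finset.sum_congr rfl fun j hj => Finset.sum_congr rfl fun k hk => hsplit j hj k hk]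
    simp only [Finset.sum_sub_distrib]
    have ext1 : ∀ j, ∑ k ∈ Finset.univ.filter (fun k => 0 < hSH.eigenvalues k),
        hSH.eigenvalues k *
          ‖(inner ℂ (hRH.eigenvectorBasis j) (hSH.eigenvectorBasis k) : ℂ)‖ ^ 2 =
        ∑ k, hSH.eigenvalues k *
          ‖(inner ℂ (hRH.eigenvectorBasis j) (hSH.eigenvectorBasis k) : ℂ)‖ ^ 2 := by
      intro j
      refine Finset.sum_subset (Finset.filter_subset _ _) fun k _ hk => ?_
      simp only [Finset.mem_filter, Finset.mem_univ, true_and, not_lt] at hk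
      have h0 : hSH.eigenvalues k = 0 := le_antisymm hk (hbnneg k)
      rw [h0, zero_mul]
    have ext2 : ∑ j ∈ Finset.univ.filter (fun j => 0 < hRH.eigenvalues j),
        ∑ k ∈ Finset.univ.filter (fun k => 0 < hSH.eigenvalues k),
          hRH.eigenvalues j *
            ‖(inner ℂ (hRH.eigenvectorBasis j) (hSH.eigenvectorBasis k) : ℂ)‖ ^ 2 =
        ∑ j, ∑ k ∈ Finset.univ.filter (fun k => 0 < hSH.eigenvalues k),
          hRH.eigenvalues j *
            ‖(inner ℂ (hRH.eigenvectorBasis j) (hSH.eigenvectorBasis k) : ℂ)‖ ^ 2 := by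
      refine Finset.sum_subset (Finset.filter_subset _ _) fun j _ hj => ?_
      simp only [Finset.mem_filter, Finset.mem_univ, true_and, not_lt] at hj
      have h0 : hRH.eigenvalues j = 0 := le_antisymm hj (hanneg j)
      refine Finset.sum_eq_zero fun k _ => by rw [h0, zero_mul]
    rw [Finset.sum_congr rfl fun j _ => ext1 j, ext2]
    ring
  -- continuity at t = 0
  have hft : ∀ x : ℝ, Filter.Tendsto (fun t => ft t x) (nhds 0) (nhds (ft 0 x)) := by
    intro x
    simp only [ft]
    apply Filter.Tendsto.div tendsto_const_nhds
    · exact (Filter.Tendsto.mul_const _ Filter.tendsto_id).add tendsto_const_nhds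
    · norm_num
  have main : Filter.Tendsto (fun t : ℝ =>
      (-∑ j ∈ Finset.univ.filter (fun j => 0 < hRH.eigenvalues j),
        ∑ k ∈ Finset.univ.filter (fun k => 0 < hSH.eigenvalues k),
          hRH.eigenvalues j * ft t (hSH.eigenvalues k * (hRH.eigenvalues j)⁻¹) *
            ‖(inner ℂ (hRH.eigenvectorBasis j) (hSH.eigenvectorBasis k) : ℂ)‖ ^ 2) +
      (1 / (1 - t)) * (Matrix.trace (ρ * (1 - suppProj σ))).re)
      (nhdsWithin 0 (Set.Ioi 0)) (nhds (1 - (Matrix.trace (suppProj ρ * σ)).re)) := by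
    rw [← hval]
    apply Filter.Tendsto.mono_left _ nhdsWithin_le_nhds
    apply Filter.Tendsto.add
    · apply Filter.Tendsto.neg
      apply tendsto_finset_sum
      intro j _
      apply tendsto_finset_sum
      intro k _
      exact (Filter.Tendsto.mul (tendsto_const_nhds.mul (hft _)) tendsto_const_nhds)
    · apply Filter.Tendsto.mul _ tendsto_const_nhds
      apply Filter.Tendsto.div tendsto_const_nhds (tendsto_const_nhds.sub Filter.tendsto_id)
      norm_num
  simp only [DnegFull, dif_pos hH]
  exact main
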